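/- If w = u v^ω is an ultimately periodic word over Σ = I × I whose letters are all among {(−,+), (+,−)}, then w ∈ L_ss: if v contains strictly more (+,−) than (−,+) then π₁(w) has a safe suffix; if strictly more (−,+) then π₂(w) has a safe suffix; if equal numbers then both components have safe suffixes. -/

import Mathlib

/-- The alphabet `I = {0, +, -}`. -/
inductive I : Type
  | zero | plus | minus
deriving DecidableEq, Inhabited

/-- Value of a single letter. -/
def lv : I → ℤ
  | I.zero => 0
  | I.plus => 1
  | I.minus => -1

/-- Energy level of a finite word. -/
def EL (v : List I) : ℤ := (v.map lv).sum

/-- The prefix `w(0) ⋯ w(n-1)` of an infinite word, of length `n`. -/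
def prefixWord (w : ℕ → I) (n : ℕ) : List I := (List.range n).map w

/-- `w` is safe if every nonempty prefix has nonnegative energy level. -/
def Safe (w : ℕ → I) : Prop := ∀ n : ℕ, 0 ≤ EL (prefixWord w (n + 1))

/-- `w` has a safe suffix. -/
def HasSafeSuffix (w : ℕ → I) : Prop := ∃ n : ℕ, Safe (fun k => w (n + k))

/-- The ultimately periodic word `u · v^ω` over `Σ = I × I`. -/
def upvw (u v : List (I × I)) : ℕ → I × I := fun n =>
  if n < u.length then u.getD n default
  else v.getD ((n - u.length) % v.length) default

lemma EL_succ (w : ℕ → I) (n : ℕ) :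
    EL (prefixWord w (n+1)) = EL (prefixWord w n) + lv (w n) := by
  simp [prefixWord, EL, List.range_succ]

lemma EL_shift (w : ℕ → I) (a b : ℕ) :
    EL (prefixWord w (a + b)) = EL (prefixWord w a) + EL (prefixWord (fun k => w (a+k)) b) := by
  induction b with
  | zero => simp [prefixWord, EL]
  | succ b ih =>
      rw [show a + (b+1) = (a+b)+1 from rfl, EL_succ, ih, EL_succ]
      ring

lemma periodic_safe (w : ℕ → I) (p : ℕ) (hp : 0 < p)
    (hper : ∀ n, w (n + p) = w n)
    (hS : 0 ≤ EL (prefixWord w p)) : HasSafeSuffix w := by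
  set S := EL (prefixWord w p) with hSdef
  have hfp : ∀ n, EL (prefixWord w (n + p)) = EL (prefixWord w n) + S := by
    intro n
    induction n with
    | zero => simp [prefixWord, EL, hSdef]
    | succ n ih =>
        rw [show n + 1 + p = (n + p) + 1 by ring, EL_succ, ih, hper, EL_succ]
        ring
  obtain ⟨n₀, hmem, hmin⟩ := Finset.exists_min_image (Finset.range (p+1))
    (fun m => EL (prefixWord w m)) ⟨0, by simp⟩
  have hglobal : ∀ n, EL (prefixWord w n₀) ≤ EL (prefixWord w n) := by
    intro n
    induction n using Nat.strong_induction_on with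
    | _ n ih =>
      by_cases h : n ≤ p
      · exact hmin n (Finset.mem_range.mpr (by omega))
      · have h1 : n = (n - p) + p := by omega
        have h2 := ih (n - p) (by omega)
        calc EL (prefixWord w n₀) ≤ EL (prefixWord w (n - p)) := h2
          _ ≤ EL (prefixWord w (n - p)) + S := by linarith
          _ = EL (prefixWord w n) := by rw [← hfp]; rw [← h1]
  refine ⟨n₀, fun m => ?_⟩
  have := EL_shift w n₀ (m + 1)
  have := hglobal (n₀ + (m + 1))
  linarith

lemma hasSafeSuffix_shift (w : ℕ → I) (m : ℕ)
    (h : HasSafeSuffix (fun k => w (m + k))) : HasSafeSuffix w := by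
  obtain ⟨n, hn⟩ := h
  refine ⟨m + n, ?_⟩
  have : (fun k => w (m + n + k)) = (fun k => w (m + (n + k))) := by
    funext k; rw [add_assoc]
  rw [this]; exact hn

lemma sum_fst (v : List (I×I)) (h : ∀ a ∈ v, a = (I.minus,I.plus) ∨ a = (I.plus,I.minus)) :
    (v.map (fun a => lv a.1)).sum
      = (v.count (I.plus,I.minus) : ℤ) - (v.count (I.minus,I.plus) : ℤ) := by
  induction v with
  | nil => simp
  | cons a t ih =>
    have ht := ih (fun b hb => h b (List.mem_cons_of_mem _ hb))
    rcases h a List.mem_cons_self with rfl | rfl <;>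
      · rw [List.map_cons, List.sum_cons, ht]
        simp [List.count_cons, lv]
        push_cast
        ring

lemma sum_snd (v : List (I×I)) (h : ∀ a ∈ v, a = (I.minus,I.plus) ∨ a = (I.plus,I.minus)) :
    (v.map (fun a => lv a.2)).sum
      = (v.count (I.minus,I.plus) : ℤ) - (v.count (I.plus,I.minus) : ℤ) := by
  induction v with
  | nil => simp
  | cons a t ih =>
    have ht := ih (fun b hb => h b (List.mem_cons_of_mem _ hb))
    rcases h a List.mem_cons_self with rfl | rfl <;>
      · rw [List.map_cons, List.sum_cons, ht]
        simp [List.count_cons, lv]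
        push_cast
        ring

lemma prefix_eq (v : List (I×I)) (f : I × I → I) :
    prefixWord (fun n => f (v.getD (n % v.length) default)) v.length
      = v.map f := by
  apply List.ext_getElem
  · simp [prefixWord]
  · intro i h1 h2
    simp only [prefixWord] at h1 ⊢
    simp only [List.getElem_map, List.getElem_range]
    rw [Nat.mod_eq_of_lt (by simpa using h1)]
    rw [List.getD_eq_getElem _ _ (by simpa using h1)]

theorem ultimately_periodic_pm_word_in_Lss_cases (v : List (I × I)) (hv : v ≠ [])
    (hletters : ∀ a ∈ v, a = (I.minus, I.plus) ∨ a = (I.plus, I.minus))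
    (u : List (I × I)) :
    (HasSafeSuffix (fun n => (upvw u v n).1) ∨ HasSafeSuffix (fun n => (upvw u v n).2)) ∧
    (v.count (I.minus, I.plus) < v.count (I.plus, I.minus) →
      HasSafeSuffix (fun n => (upvw u v n).1)) ∧
    (v.count (I.plus, I.minus) < v.count (I.minus, I.plus) →
      HasSafeSuffix (fun n => (upvw u v n).2)) ∧
    (v.count (I.plus, I.minus) = v.count (I.minus, I.plus) →
      HasSafeSuffix (fun n => (upvw u v n).1) ∧ HasSafeSuffix (fun n => (upvw u v n).2)) := by

  have hl : 0 < v.length := List.length_pos_iff.mpr hv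
  have hshift : ∀ f : I × I → I,
      (fun k => f (upvw u v (u.length + k))) = fun k => f (v.getD (k % v.length) default) := by
    intro f; funext k
    simp only [upvw]
    rw [if_neg (by omega), Nat.add_sub_cancel_left]
  have key : ∀ f : I × I → I,
      0 ≤ (v.map (fun a => lv (f a))).sum →
      HasSafeSuffix (fun n => f (upvw u v n)) := by
    intro f hsum
    apply hasSafeSuffix_shift _ u.length
    rw [show (fun k => f (upvw u v (u.length + k))) = _ from hshift f]
    apply periodic_safe _ v.length hl
    · intro n; rw [Nat.add_mod_right]
    · rw [show (fun n => f (v.getD (n % v.length) default)) =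
          (fun n => (fun a => f a) (v.getD (n % v.length) default)) from rfl]
      rw [prefix_eq v f]
      simpa [EL, List.map_map, Function.comp_def] using hsum
  have H1 : v.count (I.minus, I.plus) ≤ v.count (I.plus, I.minus) →
      HasSafeSuffix (fun n => (upvw u v n).1) := by
    intro h
    apply key Prod.fst
    rw [sum_fst v hletters]
    have : (v.count (I.minus, I.plus) : ℤ) ≤ (v.count (I.plus, I.minus) : ℤ) := by
      exact_mod_cast h
    linarith
  have H2 : v.count (I.plus, I.minus) ≤ v.count (I.minus, I.plus) →
      HasSafeSuffix (fun n => (upvw u v n).2) := by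
    intro h
    apply key Prod.snd
    rw [sum_snd v hletters]
    have : (v.count (I.plus, I.minus) : ℤ) ≤ (v.count (I.minus, I.plus) : ℤ) := by
      exact_mod_cast h
    linarith
  refine ⟨?_, fun h => H1 h.le, fun h => H2 h.le, fun h => ⟨H1 h.ge, H2 h.le⟩⟩
  rcases le_total (v.count (I.minus, I.plus)) (v.count (I.plus, I.minus)) with h | h
  · exact Or.inl (H1 h)
  · exact Or.inr (H2 h)
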